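/- Let W be an affine Weyl group acting on V* via the contragredient geometric representation, C_+ the closed fundamental chamber {f ∈ V* : ⟨f, α_i⟩ ≥ 0 for all i}, and C_− = −C_+. Then the closure of the union of all chambers wC_+ and wC_− over w ∈ W equals the whole space V*: specifically, the closure of ⋃_{w∈W} wC_+ is the half-space {f ∈ V* : ⟨f, V^⊥⟩ ≥ 0}, where V^⊥ is the one-dimensional radical of the Coxeter form, and the closure of ⋃_{w∈W} wC_− is the opposite half-space. -/

import Mathlib

set_option linter.unusedSectionVars false

variable {ι : Type} [DecidableEq ι] [Fintype ι]

/-- The Coxeter bilinear form `B(α_i, α_j) = -cos (π / m(i,j))` on `V = ι → ℝ` (Mathlib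
convention: `M i j = 0` encodes `m(i,j) = ∞`, and `-Real.cos (π / 0) = -1`). -/
noncomputable def coxeterForm (M : CoxeterMatrix ι) (x y : ι → ℝ) : ℝ :=
  ∑ i : ι, ∑ j : ι, x i * y j * (-Real.cos (Real.pi / (M i j : ℝ)))

/-- The generator of the geometric representation: `σ_{s_i}(x) = x - 2 B(α_i, x) α_i`. -/
noncomputable def coxeterRefl (M : CoxeterMatrix ι) (i : ι) : Module.End ℝ (ι → ℝ) :=
  LinearMap.id -
    (∑ j : ι, (2 * (-Real.cos (Real.pi / (M i j : ℝ)))) • LinearMap.proj j).smulRight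
      (Pi.single i 1)

/-- The canonical pairing between `V* = ι → ℝ` and `V = ι → ℝ`. -/
def pairing (x y : ι → ℝ) : ℝ := ∑ i : ι, x i * y i

/-- The contragredient action of `w ∈ W` on `V* = ι → ℝ`:
`⟨σ*_w f, α_i⟩ = ⟨f, σ_{w⁻¹} α_i⟩`. -/
noncomputable def dualAct (M : CoxeterMatrix ι) (σ : M.Group →* (Module.End ℝ (ι → ℝ))ˣ)
    (w : M.Group) (f : ι → ℝ) : ι → ℝ :=
  fun i => pairing f ((σ w⁻¹ : Module.End ℝ (ι → ℝ)) (Pi.single i 1))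

namespace AffineTits

/-- matrix entries of the Coxeter form -/
noncomputable def Bm (M : CoxeterMatrix ι) (i j : ι) : ℝ := -Real.cos (Real.pi / (M i j : ℝ))

lemma Bm_symm (M : CoxeterMatrix ι) (i j : ι) : Bm M i j = Bm M j i := by
  unfold Bm; rw [M.symmetric i j]

lemma Bm_diag (M : CoxeterMatrix ι) (i : ι) : Bm M i i = 1 := by
  unfold Bm; rw [M.diagonal i]; simp

lemma cf_eq (M : CoxeterMatrix ι) (x y : ι → ℝ) :
    coxeterForm M x y = ∑ i : ι, ∑ j : ι, x i * y j * Bm M i j := rfl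

lemma cf_symm (M : CoxeterMatrix ι) (x y : ι → ℝ) :
    coxeterForm M x y = coxeterForm M y x := by
  rw [cf_eq, cf_eq, Finset.sum_comm]
  refine Finset.sum_congr rfl fun j _ => Finset.sum_congr rfl fun i _ => ?_
  rw [Bm_symm]; ring

lemma cf_add_left (M : CoxeterMatrix ι) (x x' y : ι → ℝ) :
    coxeterForm M (x + x') y = coxeterForm M x y + coxeterForm M x' y := by
  simp only [cf_eq, ← Finset.sum_add_distrib, Pi.add_apply]
  refine Finset.sum_congr rfl fun i _ => Finset.sum_congr rfl fun j _ => by ring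

lemma cf_smul_left (M : CoxeterMatrix ι) (a : ℝ) (x y : ι → ℝ) :
    coxeterForm M (a • x) y = a * coxeterForm M x y := by
  simp only [cf_eq, Finset.mul_sum, Pi.smul_apply, smul_eq_mul]
  refine Finset.sum_congr rfl fun i _ => Finset.sum_congr rfl fun j _ => by ring

lemma cf_add_right (M : CoxeterMatrix ι) (x y y' : ι → ℝ) :
    coxeterForm M x (y + y') = coxeterForm M x y + coxeterForm M x y' := by
  rw [cf_symm, cf_add_left, cf_symm M y, cf_symm M y']

lemma cf_smul_right (M : CoxeterMatrix ι) (a : ℝ) (x y : ι → ℝ) :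
    coxeterForm M x (a • y) = a * coxeterForm M x y := by
  rw [cf_symm, cf_smul_left, cf_symm]

lemma cf_sub_left (M : CoxeterMatrix ι) (x x' y : ι → ℝ) :
    coxeterForm M (x - x') y = coxeterForm M x y - coxeterForm M x' y := by
  have := cf_add_left M (x - x') x' y
  simp at this; linarith

lemma cf_sub_right (M : CoxeterMatrix ι) (x y y' : ι → ℝ) :
    coxeterForm M x (y - y') = coxeterForm M x y - coxeterForm M x y' := by
  rw [cf_symm, cf_sub_left, cf_symm M y, cf_symm M y']

/-- the map `V → V*`, `x ↦ B(x, ·)` in coordinates -/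
noncomputable def Phi (M : CoxeterMatrix ι) (x : ι → ℝ) : ι → ℝ :=
  fun j => ∑ i : ι, x i * Bm M i j

lemma pairing_Phi (M : CoxeterMatrix ι) (x y : ι → ℝ) :
    pairing (Phi M x) y = coxeterForm M x y := by
  unfold pairing Phi
  rw [cf_eq, Finset.sum_comm]
  refine Finset.sum_congr rfl fun j _ => ?_
  rw [Finset.sum_mul]
  refine Finset.sum_congr rfl fun i _ => by ring

lemma pairing_single (f : ι → ℝ) (i : ι) : pairing f (Pi.single i 1) = f i := by
  unfold pairing
  rw [Finset.sum_eq_single i]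
  · simp
  · intro b _ hb; simp [Pi.single_apply, hb]
  · intro h; exact absurd (Finset.mem_univ i) h

lemma cf_single_right (M : CoxeterMatrix ι) (x : ι → ℝ) (i : ι) :
    coxeterForm M x (Pi.single i 1) = Phi M x i := by
  rw [← pairing_Phi, pairing_single]

lemma Phi_single (M : CoxeterMatrix ι) (i j : ι) : Phi M (Pi.single i 1) j = Bm M i j := by
  unfold Phi
  rw [Finset.sum_eq_single i]
  · simp
  · intro b _ hb; simp [Pi.single_apply, hb]
  · intro h; exact absurd (Finset.mem_univ i) h

lemma Phi_add (M : CoxeterMatrix ι) (x y : ι → ℝ) : Phi M (x + y) = Phi M x + Phi M y := by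
  funext j
  simp only [Phi, Pi.add_apply, ← Finset.sum_add_distrib]
  exact Finset.sum_congr rfl fun i _ => by ring

lemma Phi_smul (M : CoxeterMatrix ι) (a : ℝ) (x : ι → ℝ) : Phi M (a • x) = a • Phi M x := by
  funext j
  simp only [Phi, Pi.smul_apply, smul_eq_mul, Finset.mul_sum]
  exact Finset.sum_congr rfl fun i _ => by ring

lemma Phi_sub (M : CoxeterMatrix ι) (x y : ι → ℝ) : Phi M (x - y) = Phi M x - Phi M y := by
  have := Phi_add M (x - y) y
  simp at this
  rw [this]; abel

lemma Phi_sub_single (M : CoxeterMatrix ι) (x : ι → ℝ) (a : ℝ) (i : ι) :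
    Phi M (x - a • (Pi.single i 1 : ι → ℝ)) = fun j => Phi M x j - a * Bm M i j := by
  funext j
  rw [Phi_sub, Phi_smul]
  simp [Phi_single]

lemma cf_sub_single (M : CoxeterMatrix ι) (x : ι → ℝ) (a : ℝ) (i : ι) :
    coxeterForm M (x - a • (Pi.single i 1 : ι → ℝ)) (x - a • (Pi.single i 1 : ι → ℝ))
      = coxeterForm M x x - 2 * a * Phi M x i + a ^ 2 := by
  rw [cf_sub_left, cf_sub_right, cf_sub_right, cf_smul_left, cf_smul_left, cf_smul_right,
    cf_smul_right, cf_single_right, cf_symm M (Pi.single i 1) x, cf_single_right,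
    cf_single_right, Phi_single, Bm_diag]
  ring

section pairing_lemmas

lemma pairing_sub_left (f f' v : ι → ℝ) : pairing (f - f') v = pairing f v - pairing f' v := by
  unfold pairing; rw [← Finset.sum_sub_distrib]
  exact Finset.sum_congr rfl fun i _ => by simp; ring

lemma pairing_sub_right (f v v' : ι → ℝ) : pairing f (v - v') = pairing f v - pairing f v' := by
  unfold pairing; rw [← Finset.sum_sub_distrib]
  exact Finset.sum_congr rfl fun i _ => by simp; ring

lemma pairing_add_right (f v v' : ι → ℝ) : pairing f (v + v') = pairing f v + pairing f v' := by
  unfold pairing; rw [← Finset.sum_add_distrib]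
  exact Finset.sum_congr rfl fun i _ => by simp; ring

lemma pairing_smul_right (f : ι → ℝ) (a : ℝ) (v : ι → ℝ) :
    pairing f (a • v) = a * pairing f v := by
  unfold pairing; rw [Finset.mul_sum]
  exact Finset.sum_congr rfl fun i _ => by simp; ring

lemma pairing_sum_right {κ : Type*} (s : Finset κ) (f : ι → ℝ) (g : κ → ι → ℝ) :
    pairing f (∑ a ∈ s, g a) = ∑ a ∈ s, pairing f (g a) := by
  unfold pairing
  rw [Finset.sum_comm]
  refine Finset.sum_congr rfl fun i _ => ?_
  rw [Finset.sum_apply, Finset.mul_sum]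

lemma pairing_linear (f : ι → ℝ) (A : Module.End ℝ (ι → ℝ)) (v : ι → ℝ) :
    pairing (fun i => pairing f (A (Pi.single i 1))) v = pairing f (A v) := by
  have hv : A v = ∑ i : ι, v i • A (Pi.single i 1) := by
    conv_lhs => rw [← Finset.univ_sum_single v, map_sum]
    refine Finset.sum_congr rfl fun i _ => ?_
    have : (Pi.single i (v i) : ι → ℝ) = v i • (Pi.single i 1 : ι → ℝ) := by
      rw [← Pi.single_smul, smul_eq_mul, mul_one]
    rw [this, map_smul]
  rw [hv, pairing_sum_right]
  have : pairing (fun i => pairing f (A (Pi.single i 1))) v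
      = ∑ i : ι, pairing f (A (Pi.single i 1)) * v i := rfl
  rw [this]
  refine Finset.sum_congr rfl fun i _ => ?_
  rw [pairing_smul_right]
  ring

end pairing_lemmas

section dualAct_lemmas

variable (M : CoxeterMatrix ι) (σ : M.Group →* (Module.End ℝ (ι → ℝ))ˣ)

lemma pairing_dualAct (w : M.Group) (f v : ι → ℝ) :
    pairing (dualAct M σ w f) v = pairing f ((σ w⁻¹ : Module.End ℝ (ι → ℝ)) v) :=
  pairing_linear f _ v

lemma dualAct_one (f : ι → ℝ) : dualAct M σ 1 f = f := by
  funext i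
  show pairing f ((σ (1 : M.Group)⁻¹ : Module.End ℝ (ι → ℝ)) (Pi.single i 1)) = f i
  rw [inv_one, map_one, Units.val_one, Module.End.one_apply, pairing_single]

lemma dualAct_mul (w w' : M.Group) (f : ι → ℝ) :
    dualAct M σ (w * w') f = dualAct M σ w (dualAct M σ w' f) := by
  funext i
  show pairing f ((σ (w * w')⁻¹ : Module.End ℝ (ι → ℝ)) (Pi.single i 1))
    = pairing (dualAct M σ w' f) ((σ w⁻¹ : Module.End ℝ (ι → ℝ)) (Pi.single i 1))
  rw [pairing_dualAct, mul_inv_rev, map_mul, Units.val_mul, Module.End.mul_apply]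

lemma dualAct_sub (w : M.Group) (f f' : ι → ℝ) :
    dualAct M σ w (f - f') = dualAct M σ w f - dualAct M σ w f' := by
  funext i
  show pairing (f - f') _ = pairing f _ - pairing f' _
  rw [pairing_sub_left]

lemma simple_inv (i : ι) : (M.simple i)⁻¹ = M.simple i :=
  M.toCoxeterSystem.inv_simple i

lemma coxeterRefl_single (i j : ι) :
    coxeterRefl M i (Pi.single j 1)
      = Pi.single j 1 - (2 * Bm M i j) • (Pi.single i 1 : ι → ℝ) := by
  unfold coxeterRefl
  rw [LinearMap.sub_apply, LinearMap.id_apply, LinearMap.smulRight_apply, LinearMap.sum_apply]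
  congr 1
  have : ∀ j' : ι, ((2 * (-Real.cos (Real.pi / (M i j' : ℝ)))) • LinearMap.proj j' :
      (ι → ℝ) →ₗ[ℝ] ℝ) (Pi.single j 1) = (2 * Bm M i j') * (Pi.single j 1 : ι → ℝ) j' := by
    intro j'
    rw [LinearMap.smul_apply, LinearMap.proj_apply, smul_eq_mul]
    rfl
  rw [Finset.sum_congr rfl fun j' _ => this j']
  rw [Finset.sum_eq_single j]
  · simp
  · intro b _ hb; simp [Pi.single_apply, hb]
  · intro h; exact absurd (Finset.mem_univ j) h

lemma dualAct_simple (hσ : ∀ i, (σ (M.simple i) : Module.End ℝ (ι → ℝ)) = coxeterRefl M i)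
    (i : ι) (f : ι → ℝ) (j : ι) :
    dualAct M σ (M.simple i) f j = f j - 2 * Bm M i j * f i := by
  show pairing f ((σ (M.simple i)⁻¹ : Module.End ℝ (ι → ℝ)) (Pi.single j 1)) = _
  rw [simple_inv, hσ i, coxeterRefl_single, pairing_sub_right, pairing_smul_right,
    pairing_single, pairing_single]

variable {δ : ι → ℝ}

lemma Phi_delta (hδrad : ∀ y, coxeterForm M δ y = 0) : Phi M δ = 0 := by
  funext j
  rw [← cf_single_right, hδrad]
  rfl

lemma sigma_fix_delta (hσ : ∀ i, (σ (M.simple i) : Module.End ℝ (ι → ℝ)) = coxeterRefl M i)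
    (hδrad : ∀ y, coxeterForm M δ y = 0) (w : M.Group) :
    (σ w : Module.End ℝ (ι → ℝ)) δ = δ := by
  refine M.toCoxeterSystem.simple_induction (p := fun u => (σ u : Module.End ℝ (ι → ℝ)) δ = δ) w (fun i => ?_) ?_ (fun w w' hw hw' => ?_)
  · show (σ (M.simple i) : Module.End ℝ (ι → ℝ)) δ = δ
    rw [hσ i]
    unfold coxeterRefl
    rw [LinearMap.sub_apply, LinearMap.id_apply, LinearMap.smulRight_apply, LinearMap.sum_apply]
    have h1 : ∀ j' : ι, ((2 * (-Real.cos (Real.pi / (M i j' : ℝ)))) • LinearMap.proj j' :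
        (ι → ℝ) →ₗ[ℝ] ℝ) δ = (2 * Bm M i j') * δ j' := by
      intro j'
      rw [LinearMap.smul_apply, LinearMap.proj_apply, smul_eq_mul]
      rfl
    rw [Finset.sum_congr rfl fun j' _ => h1 j']
    have h2 : ∑ j' : ι, 2 * Bm M i j' * δ j' = 0 := by
      have h3 : ∑ j' : ι, 2 * Bm M i j' * δ j' = 2 * Phi M δ i := by
        unfold Phi
        rw [Finset.mul_sum]
        exact Finset.sum_congr rfl fun j' _ => by rw [Bm_symm M i j']; ring
      rw [h3, Phi_delta M hδrad]
      simp
    rw [h2, zero_smul, sub_zero]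
  · show (σ (1 : M.Group) : Module.End ℝ (ι → ℝ)) δ = δ
    rw [map_one, Units.val_one, Module.End.one_apply]
  · show (σ (w * w') : Module.End ℝ (ι → ℝ)) δ = δ
    rw [map_mul, Units.val_mul, Module.End.mul_apply]
    rw [show (σ w' : Module.End ℝ (ι → ℝ)) δ = δ from hw', show (σ w : Module.End ℝ (ι → ℝ)) δ = δ from hw]

lemma pairing_dualAct_delta (hσ : ∀ i, (σ (M.simple i) : Module.End ℝ (ι → ℝ)) = coxeterRefl M i)
    (hδrad : ∀ y, coxeterForm M δ y = 0) (w : M.Group) (f : ι → ℝ) :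
    pairing (dualAct M σ w f) δ = pairing f δ := by
  rw [pairing_dualAct, sigma_fix_delta M σ hσ hδrad w⁻¹]

end dualAct_lemmas

section analysis

variable (M : CoxeterMatrix ι)

lemma pairing_add_left (f f' v : ι → ℝ) : pairing (f + f') v = pairing f v + pairing f' v := by
  unfold pairing; rw [← Finset.sum_add_distrib]
  exact Finset.sum_congr rfl fun i _ => by simp; ring

lemma pairing_smul_left (a : ℝ) (f v : ι → ℝ) : pairing (a • f) v = a * pairing f v := by
  unfold pairing; rw [Finset.mul_sum]
  exact Finset.sum_congr rfl fun i _ => by simp; ring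

lemma pairing_zero_left (v : ι → ℝ) : pairing 0 v = 0 := by
  unfold pairing; simp

/-- Cauchy–Schwarz for the positive semidefinite Coxeter form. -/
lemma cf_cauchy_schwarz (hPSD : ∀ x : ι → ℝ, 0 ≤ coxeterForm M x x) (x y : ι → ℝ) :
    (coxeterForm M x y) ^ 2 ≤ coxeterForm M x x * coxeterForm M y y := by
  set a := coxeterForm M x x with ha
  set c := coxeterForm M x y with hc
  set d := coxeterForm M y y with hd
  have hd0 : 0 ≤ d := hPSD y
  have ha0 : 0 ≤ a := hPSD x
  have key : ∀ t : ℝ, 0 ≤ a + 2 * t * c + t ^ 2 * d := by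
    intro t
    have h := hPSD (x + t • y)
    have hexp : coxeterForm M (x + t • y) (x + t • y) = a + 2 * t * c + t ^ 2 * d := by
      simp only [cf_add_left, cf_add_right, cf_smul_left, cf_smul_right]
      rw [cf_symm M y x]
      ring
    rw [hexp] at h
    exact h
  rcases eq_or_lt_of_le hd0 with hdz | hdp
  · have hc0 : c = 0 := by
      by_contra hcne
      have h := key (-(a + 1) / (2 * c))
      have e1 : 2 * (-(a + 1) / (2 * c)) * c = -(a + 1) := by field_simp
      rw [e1, ← hdz, mul_zero, add_zero] at h
      linarith
    rw [hc0, ← hdz]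
    nlinarith
  · have h := key (-(c / d))
    have e1 : 2 * (-(c / d)) * c = -(2 * (c ^ 2 / d)) := by ring
    have e2 : (-(c / d)) ^ 2 * d = c ^ 2 / d := by
      rw [neg_sq, div_pow, div_mul_eq_mul_div, pow_two d, ← div_div, mul_div_assoc,
        div_self (ne_of_gt hdp), mul_one]
    rw [e1, e2] at h
    have h2 : c ^ 2 / d ≤ a := by linarith
    have := (div_le_iff₀ hdp).mp h2
    linarith

/-- The key norm bound: `‖Φ z‖ ≤ √B(z,z)` (sup norm), since `Φ z j = B(z, α_j)` and
`B(α_j, α_j) = 1`. -/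
lemma norm_Phi_le (hPSD : ∀ x : ι → ℝ, 0 ≤ coxeterForm M x x) (z : ι → ℝ) :
    ‖Phi M z‖ ≤ Real.sqrt (coxeterForm M z z) := by
  rw [pi_norm_le_iff_of_nonneg (Real.sqrt_nonneg _)]
  intro j
  have h1 : (Phi M z j) ^ 2 ≤ coxeterForm M z z := by
    have := cf_cauchy_schwarz M hPSD z (Pi.single j 1)
    rw [cf_single_right] at this
    have hjj : coxeterForm M (Pi.single j 1) (Pi.single j 1) = 1 := by
      rw [cf_single_right, Phi_single, Bm_diag]
    rw [hjj, mul_one] at this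
    exact this
  have : ‖Phi M z j‖ = Real.sqrt ((Phi M z j) ^ 2) := by
    rw [Real.sqrt_sq_eq_abs, Real.norm_eq_abs]
  rw [this]
  exact Real.sqrt_le_sqrt h1

/-- `Phi` as a linear map. -/
noncomputable def PhiL : (ι → ℝ) →ₗ[ℝ] (ι → ℝ) where
  toFun := Phi M
  map_add' := Phi_add M
  map_smul' := Phi_smul M

lemma cf_zero_of_Phi_zero (z : ι → ℝ) (hz : Phi M z = 0) (y : ι → ℝ) :
    coxeterForm M z y = 0 := by
  rw [← pairing_Phi, hz, pairing_zero_left]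

variable {δ : ι → ℝ}

lemma exists_Phi_preimage (hδrad : ∀ y, coxeterForm M δ y = 0)
    (hradspan : ∀ v : ι → ℝ, (∀ y, coxeterForm M v y = 0) → ∃ t : ℝ, v = t • δ)
    (hp : pairing δ δ ≠ 0) (u : ι → ℝ) (hu : pairing u δ = 0) :
    ∃ x, Phi M x = u := by
  classical
  have hδne : δ ≠ 0 := fun h => hp (by rw [h, pairing_zero_left])
  let ℓ : (ι → ℝ) →ₗ[ℝ] ℝ :=
    { toFun := fun v => pairing v δ
      map_add' := fun a b => pairing_add_left a b δ
      map_smul' := fun a v => pairing_smul_left a v δ }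
  have hker : LinearMap.ker (PhiL M) = Submodule.span ℝ {δ} := by
    apply le_antisymm
    · intro z hz
      rw [LinearMap.mem_ker] at hz
      obtain ⟨t, ht⟩ := hradspan z (cf_zero_of_Phi_zero M z hz)
      rw [Submodule.mem_span_singleton]
      exact ⟨t, ht.symm⟩
    · rw [Submodule.span_singleton_le_iff_mem, LinearMap.mem_ker]
      exact Phi_delta M hδrad
  have hrange_le : LinearMap.range (PhiL M) ≤ LinearMap.ker ℓ := by
    rintro _ ⟨x, rfl⟩
    show pairing (Phi M x) δ = 0
    rw [pairing_Phi, cf_symm]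
    exact hδrad x
  have hsurjℓ : Function.Surjective ℓ := by
    intro r
    refine ⟨(r / pairing δ δ) • δ, ?_⟩
    show pairing ((r / pairing δ δ) • δ) δ = r
    rw [pairing_smul_left, div_mul_cancel₀ _ hp]
  have h1 : Module.finrank ℝ (LinearMap.range (PhiL M)) + 1 = Fintype.card ι := by
    have := LinearMap.finrank_range_add_finrank_ker (PhiL M)
    rw [hker, finrank_span_singleton hδne, Module.finrank_fintype_fun_eq_card] at this
    exact this
  have h2 : 1 + Module.finrank ℝ (LinearMap.ker ℓ) = Fintype.card ι := by
    have := LinearMap.finrank_range_add_finrank_ker ℓ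
    rw [LinearMap.range_eq_top.mpr hsurjℓ, finrank_top, Module.finrank_self,
      Module.finrank_fintype_fun_eq_card] at this
    exact this
  have heq : LinearMap.range (PhiL M) = LinearMap.ker ℓ :=
    Submodule.eq_of_le_of_finrank_le hrange_le (by omega)
  have : u ∈ LinearMap.range (PhiL M) := by
    rw [heq]
    exact hu
  obtain ⟨x, hx⟩ := this
  exact ⟨x, hx⟩

end analysis

section main

variable (M : CoxeterMatrix ι) (σ : M.Group →* (Module.End ℝ (ι → ℝ))ˣ)

lemma simple_mul_self (i : ι) : M.simple i * M.simple i = 1 :=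
  M.toCoxeterSystem.simple_mul_simple_self i

/-- The key induction: playing the numbers game at coordinates below `-ε` strictly decreases
the invariant `B(x,x)` (where `Φ x = f - g`) by at least `4 gmin ε`, and once all coordinates
are `≥ -ε` we are within a controlled distance of a chamber. -/
lemma chamber_approx (hσ : ∀ i, (σ (M.simple i) : Module.End ℝ (ι → ℝ)) = coxeterRefl M i)
    (hPSD : ∀ x : ι → ℝ, 0 ≤ coxeterForm M x x)
    (g : ι → ℝ) (gmin : ℝ) (hgmin : 0 < gmin) (hg : ∀ i, gmin ≤ g i)
    (ε : ℝ) (hε : 0 < ε) (D₀ : ℝ) :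
    ∀ n : ℕ, ∀ f x : ι → ℝ, f - g = Phi M x → coxeterForm M x x ≤ D₀ →
      coxeterForm M x x < n * (4 * gmin * ε) →
      ∃ (w : M.Group) (h z : ι → ℝ), (∀ i, 0 ≤ h i) ∧ dualAct M σ w h - f = Phi M z ∧
        coxeterForm M z z ≤ (ε / gmin) ^ 2 * D₀ := by
  intro n
  induction n with
  | zero =>
    intro f x _ _ hlt
    exfalso
    have := hPSD x
    simp only [Nat.cast_zero, zero_mul] at hlt
    linarith
  | succ n ih =>
    intro f x hfx hD hlt
    have hPhix : ∀ j, Phi M x j = f j - g j := by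
      intro j; rw [← hfx]; rfl
    by_cases hA : ∀ i, -ε ≤ f i
    · -- all coordinates nearly nonnegative: move slightly towards g, stay in the chamber of 1
      have htpos : 0 < ε + gmin := by linarith
      set t : ℝ := ε / (ε + gmin) with ht
      have ht0 : 0 ≤ t := div_nonneg hε.le htpos.le
      have ht1 : t ≤ 1 := by rw [ht, div_le_one htpos]; linarith
      have hte : t ≤ ε / gmin := by rw [ht]; gcongr; linarith
      refine ⟨1, f + t • (g - f), (-t) • x, ?_, ?_, ?_⟩
      · intro i
        have h1 : gmin ≤ g i := hg i
        have h2 : -ε ≤ f i := hA i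
        have he : (1 - t) * ε = t * gmin := by
          rw [ht]; field_simp; ring
        have hv : (f + t • (g - f)) i = (1 - t) * f i + t * g i := by
          simp only [Pi.add_apply, Pi.smul_apply, Pi.sub_apply, smul_eq_mul]
          ring
        rw [hv]
        have hm1 : (1 - t) * (-ε) ≤ (1 - t) * f i :=
          mul_le_mul_of_nonneg_left h2 (by linarith)
        have hm2 : t * gmin ≤ t * g i := mul_le_mul_of_nonneg_left h1 ht0
        nlinarith [hm1, hm2, he]
      · rw [dualAct_one, add_sub_cancel_left, Phi_smul, ← hfx, neg_smul, ← smul_neg, neg_sub]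
      · rw [cf_smul_left, cf_smul_right]
        have h1 : t ^ 2 ≤ (ε / gmin) ^ 2 := pow_le_pow_left₀ ht0 hte 2
        calc -t * (-t * coxeterForm M x x) = t ^ 2 * coxeterForm M x x := by ring
          _ ≤ (ε / gmin) ^ 2 * D₀ := mul_le_mul h1 hD (hPSD x) (sq_nonneg _)
    · -- some coordinate is very negative: reflect there
      push_neg at hA
      obtain ⟨i, hi⟩ := hA
      have hεg : 0 < ε * gmin := mul_pos hε hgmin
      have hfg : f i * g i ≤ -(ε * gmin) := by
        have h1 : f i * g i ≤ (-ε) * g i :=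
          mul_le_mul_of_nonneg_right hi.le (le_trans hgmin.le (hg i))
        have h2 : (-ε) * g i ≤ (-ε) * gmin := mul_le_mul_of_nonpos_left (hg i) (by linarith)
        linarith
      have hfx' : dualAct M σ (M.simple i) f - g
          = Phi M (x - (2 * f i) • (Pi.single i 1 : ι → ℝ)) := by
        funext j
        rw [Phi_sub_single]
        show dualAct M σ (M.simple i) f j - g j = Phi M x j - 2 * f i * Bm M i j
        rw [dualAct_simple M σ hσ i f j, hPhix j]
        ring
      have hcfx' : coxeterForm M (x - (2 * f i) • (Pi.single i 1 : ι → ℝ))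
            (x - (2 * f i) • (Pi.single i 1 : ι → ℝ))
          = coxeterForm M x x + 4 * (f i * g i) := by
        rw [cf_sub_single, hPhix i]
        ring
      have hD' : coxeterForm M (x - (2 * f i) • (Pi.single i 1 : ι → ℝ))
          (x - (2 * f i) • (Pi.single i 1 : ι → ℝ)) ≤ D₀ := by
        rw [hcfx']; linarith
      have hlt' : coxeterForm M (x - (2 * f i) • (Pi.single i 1 : ι → ℝ))
          (x - (2 * f i) • (Pi.single i 1 : ι → ℝ)) < n * (4 * gmin * ε) := by
        rw [hcfx']
        have hcast : ((n + 1 : ℕ) : ℝ) * (4 * gmin * ε) = n * (4 * gmin * ε) + 4 * (gmin * ε) := by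
          push_cast; ring
        rw [hcast] at hlt
        nlinarith [hfg, hlt]
      obtain ⟨w', h, z', hh, hwz, hz⟩ := ih (dualAct M σ (M.simple i) f) _ hfx' hD' hlt'
      refine ⟨M.simple i * w', h, z' - (2 * Phi M z' i) • (Pi.single i 1 : ι → ℝ), hh, ?_, ?_⟩
      · rw [dualAct_mul]
        have hinv : dualAct M σ (M.simple i) (dualAct M σ (M.simple i) f) = f := by
          rw [← dualAct_mul, simple_mul_self, dualAct_one]
        calc dualAct M σ (M.simple i) (dualAct M σ w' h) - f
            = dualAct M σ (M.simple i) (dualAct M σ w' h)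
              - dualAct M σ (M.simple i) (dualAct M σ (M.simple i) f) := by rw [hinv]
          _ = dualAct M σ (M.simple i)
              (dualAct M σ w' h - dualAct M σ (M.simple i) f) := (dualAct_sub M σ _ _ _).symm
          _ = dualAct M σ (M.simple i) (Phi M z') := by rw [hwz]
          _ = Phi M (z' - (2 * Phi M z' i) • (Pi.single i 1 : ι → ℝ)) := by
              funext j
              rw [Phi_sub_single]
              show dualAct M σ (M.simple i) (Phi M z') j
                = Phi M z' j - 2 * Phi M z' i * Bm M i j
              rw [dualAct_simple M σ hσ i _ j]
              ring
      · rw [cf_sub_single]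
        have he : coxeterForm M z' z' - 2 * (2 * Phi M z' i) * Phi M z' i
            + (2 * Phi M z' i) ^ 2 = coxeterForm M z' z' := by ring
        rw [he]
        exact hz

end main

section assembly

variable (M : CoxeterMatrix ι) (σ : M.Group →* (Module.End ℝ (ι → ℝ))ˣ)

lemma pairing_neg_left (f v : ι → ℝ) : pairing (-f) v = -pairing f v := by
  unfold pairing
  rw [← Finset.sum_neg_distrib]
  exact Finset.sum_congr rfl fun i _ => by simp

lemma dualAct_neg (w : M.Group) (f : ι → ℝ) : dualAct M σ w (-f) = -dualAct M σ w f := by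
  funext i
  show pairing (-f) _ = -pairing f _
  rw [pairing_neg_left]

lemma pairing_continuous (δ : ι → ℝ) : Continuous fun f : ι → ℝ => pairing f δ := by
  unfold pairing
  exact continuous_finset_sum _ fun i _ => (continuous_apply i).mul continuous_const

variable {δ : ι → ℝ}

lemma mem_closure_of_pos (hσ : ∀ i, (σ (M.simple i) : Module.End ℝ (ι → ℝ)) = coxeterRefl M i)
    (hPSD : ∀ x : ι → ℝ, 0 ≤ coxeterForm M x x)
    (hδpos : ∀ i, 0 < δ i) (hδrad : ∀ y, coxeterForm M δ y = 0)
    (hradspan : ∀ v : ι → ℝ, (∀ y, coxeterForm M v y = 0) → ∃ t : ℝ, v = t • δ)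
    (f : ι → ℝ) (hf : 0 < pairing f δ) :
    f ∈ closure (⋃ w : M.Group, dualAct M σ w '' {f : ι → ℝ | ∀ i, 0 ≤ f i}) := by
  have hne : Nonempty ι := by
    by_contra hcon
    rw [not_nonempty_iff] at hcon
    have : pairing f δ = 0 := by
      unfold pairing
      rw [Finset.univ_eq_empty, Finset.sum_empty]
    linarith
  have hS2 : 0 < pairing δ δ :=
    Finset.sum_pos (fun i _ => mul_pos (hδpos i) (hδpos i)) Finset.univ_nonempty
  set c := pairing f δ with hc
  set g : ι → ℝ := (c / pairing δ δ) • δ with hgdef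
  have hcS : 0 < c / pairing δ δ := div_pos hf hS2
  obtain ⟨i₀, -, hi₀⟩ := Finset.exists_min_image Finset.univ g Finset.univ_nonempty
  set gmin := g i₀ with hgm
  have hgmin : 0 < gmin := by
    rw [hgm, hgdef]
    exact mul_pos hcS (hδpos i₀)
  have hg : ∀ i, gmin ≤ g i := fun i => hi₀ i (Finset.mem_univ i)
  have hpg : pairing g δ = c := by
    rw [hgdef, pairing_smul_left, div_mul_cancel₀ _ hS2.ne']
  have hu : pairing (f - g) δ = 0 := by
    rw [pairing_sub_left, hpg, ← hc, sub_self]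
  obtain ⟨x₀, hx₀⟩ := exists_Phi_preimage M hδrad hradspan hS2.ne' (f - g) hu
  set D₀ := coxeterForm M x₀ x₀ with hD₀def
  have hD₀ : 0 ≤ D₀ := hPSD x₀
  rw [Metric.mem_closure_iff]
  intro r hr
  have hsq : 0 ≤ Real.sqrt D₀ := Real.sqrt_nonneg _
  set ε' : ℝ := gmin * r / (2 * (Real.sqrt D₀ + 1)) with hε'
  have hε'pos : 0 < ε' := by
    rw [hε']
    positivity
  have hκ : 0 < 4 * gmin * ε' := by positivity
  set n : ℕ := Nat.ceil (D₀ / (4 * gmin * ε')) + 1 with hn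
  have hnlt : D₀ < n * (4 * gmin * ε') := by
    have h1 : D₀ / (4 * gmin * ε') ≤ Nat.ceil (D₀ / (4 * gmin * ε')) :=
      Nat.le_ceil _
    have h2 : D₀ = D₀ / (4 * gmin * ε') * (4 * gmin * ε') := by field_simp
    rw [hn]
    push_cast
    nlinarith [h1, hκ]
  obtain ⟨w, h, z, hh, hwz, hzb⟩ :=
    chamber_approx M σ hσ hPSD g gmin hgmin hg ε' hε'pos D₀ n f x₀ hx₀.symm le_rfl hnlt
  refine ⟨dualAct M σ w h, Set.mem_iUnion.mpr ⟨w, Set.mem_image_of_mem _ hh⟩, ?_⟩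
  rw [dist_eq_norm]
  have hneg : f - dualAct M σ w h = -Phi M z := by
    rw [← hwz]; abel
  rw [hneg, norm_neg]
  have hb := norm_Phi_le M hPSD z
  have h1 : Real.sqrt (coxeterForm M z z) ≤ Real.sqrt ((ε' / gmin) ^ 2 * D₀) :=
    Real.sqrt_le_sqrt hzb
  have heval : Real.sqrt ((ε' / gmin) ^ 2 * D₀) = ε' / gmin * Real.sqrt D₀ := by
    rw [Real.sqrt_mul (sq_nonneg _), Real.sqrt_sq (by positivity)]
  have hfin : ε' / gmin * Real.sqrt D₀ < r := by
    have he : ε' / gmin = r / (2 * (Real.sqrt D₀ + 1)) := by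
      rw [hε']
      field_simp
    rw [he, div_mul_eq_mul_div, div_lt_iff₀ (by positivity)]
    nlinarith [hsq, hr]
  linarith [hb, h1]

lemma closure_subset_halfspace
    (hσ : ∀ i, (σ (M.simple i) : Module.End ℝ (ι → ℝ)) = coxeterRefl M i)
    (hδpos : ∀ i, 0 < δ i) (hδrad : ∀ y, coxeterForm M δ y = 0) :
    closure (⋃ w : M.Group, dualAct M σ w '' {f : ι → ℝ | ∀ i, 0 ≤ f i})
      ⊆ {f : ι → ℝ | 0 ≤ pairing f δ} := by
  apply closure_minimal
  · rintro p hp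
    rw [Set.mem_iUnion] at hp
    obtain ⟨w, q, hq, rfl⟩ := hp
    show 0 ≤ pairing (dualAct M σ w q) δ
    rw [pairing_dualAct_delta M σ hσ hδrad]
    exact Finset.sum_nonneg fun i _ => mul_nonneg (hq i) (hδpos i).le
  · have : {f : ι → ℝ | 0 ≤ pairing f δ} = (fun f : ι → ℝ => pairing f δ) ⁻¹' Set.Ici 0 := rfl
    rw [this]
    exact IsClosed.preimage (pairing_continuous δ) isClosed_Ici

lemma halfspace_subset_closure
    (hσ : ∀ i, (σ (M.simple i) : Module.End ℝ (ι → ℝ)) = coxeterRefl M i)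
    (hPSD : ∀ x : ι → ℝ, 0 ≤ coxeterForm M x x)
    (hδpos : ∀ i, 0 < δ i) (hδrad : ∀ y, coxeterForm M δ y = 0)
    (hradspan : ∀ v : ι → ℝ, (∀ y, coxeterForm M v y = 0) → ∃ t : ℝ, v = t • δ)
    [Nonempty ι] :
    {f : ι → ℝ | 0 ≤ pairing f δ}
      ⊆ closure (⋃ w : M.Group, dualAct M σ w '' {f : ι → ℝ | ∀ i, 0 ≤ f i}) := by
  intro f hf
  have hmem : ∀ k : ℕ, f + (1 / (k + 1) : ℝ) • δ ∈
      closure (⋃ w : M.Group, dualAct M σ w '' {f : ι → ℝ | ∀ i, 0 ≤ f i}) := by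
    intro k
    apply mem_closure_of_pos M σ hσ hPSD hδpos hδrad hradspan
    rw [pairing_add_left, pairing_smul_left]
    have hpos : 0 < (1 / (k + 1) : ℝ) := by positivity
    have hp : 0 < pairing δ δ :=
      Finset.sum_pos (fun i _ => mul_pos (hδpos i) (hδpos i)) Finset.univ_nonempty
    have := mul_pos hpos hp
    have h0 : (0 : ℝ) ≤ pairing f δ := hf
    linarith
  have htend : Filter.Tendsto (fun k : ℕ => f + (1 / (k + 1) : ℝ) • δ)
      Filter.atTop (nhds f) := by
    have h1 : Filter.Tendsto (fun k : ℕ => (1 / (k + 1) : ℝ)) Filter.atTop (nhds 0) :=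
      tendsto_one_div_add_atTop_nhds_zero_nat
    have h2 : Filter.Tendsto (fun k : ℕ => (1 / (k + 1) : ℝ) • δ) Filter.atTop
        (nhds ((0 : ℝ) • δ)) := h1.smul_const δ
    rw [zero_smul] at h2
    have := Filter.Tendsto.add (tendsto_const_nhds (x := f)) h2
    rw [add_zero] at this
    exact this
  exact isClosed_closure.mem_of_tendsto htend (Filter.Eventually.of_forall hmem)

end assembly

end AffineTits

open AffineTits

/-- Let `W` be an affine Coxeter group (the Coxeter form is positive semidefinite with
one-dimensional radical spanned by a vector `δ` with positive coordinates), acting on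
`V* = ι → ℝ` by the contragredient of the geometric representation. Let
`C₊ = {f : ⟨f, α_i⟩ ≥ 0 ∀ i}` be the closed fundamental chamber and `C₋ = -C₊`. Then the closure
of `⋃_w wC₊` is the half-space `{f : ⟨f, δ⟩ ≥ 0}`, the closure of `⋃_w wC₋` is the opposite
half-space `{f : ⟨f, δ⟩ ≤ 0}`, and the closure of the union of all these chambers is all
of `V*`. -/
theorem affine_tits_cone_halfspace (M : CoxeterMatrix ι)
    (σ : M.Group →* (Module.End ℝ (ι → ℝ))ˣ)
    (hσ : ∀ i, (σ (M.simple i) : Module.End ℝ (ι → ℝ)) = coxeterRefl M i)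
    (hPSD : ∀ x : ι → ℝ, 0 ≤ coxeterForm M x x)
    (δ : ι → ℝ) (hδpos : ∀ i, 0 < δ i) (hδrad : ∀ y, coxeterForm M δ y = 0)
    (hradspan : ∀ v : ι → ℝ, (∀ y, coxeterForm M v y = 0) → ∃ t : ℝ, v = t • δ) :
    closure (⋃ w : M.Group, dualAct M σ w '' {f : ι → ℝ | ∀ i, 0 ≤ f i})
        = {f : ι → ℝ | 0 ≤ pairing f δ} ∧
    closure (⋃ w : M.Group, dualAct M σ w '' {f : ι → ℝ | ∀ i, f i ≤ 0})
        = {f : ι → ℝ | pairing f δ ≤ 0} ∧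
    closure ((⋃ w : M.Group, dualAct M σ w '' {f : ι → ℝ | ∀ i, 0 ≤ f i}) ∪
        (⋃ w : M.Group, dualAct M σ w '' {f : ι → ℝ | ∀ i, f i ≤ 0})) = Set.univ := by
  classical
  cases isEmpty_or_nonempty ι with
  | inl hemp =>
    have hpair : ∀ f : ι → ℝ, pairing f δ = 0 := fun f => by
      unfold pairing
      rw [Finset.univ_eq_empty, Finset.sum_empty]
    have hSp : (⋃ w : M.Group, dualAct M σ w '' {f : ι → ℝ | ∀ i, 0 ≤ f i}) = Set.univ := by
      apply Set.eq_univ_of_forall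
      intro x
      exact Set.mem_iUnion.mpr ⟨1, ⟨x, fun i => isEmptyElim i, dualAct_one M σ x⟩⟩
    have hSm : (⋃ w : M.Group, dualAct M σ w '' {f : ι → ℝ | ∀ i, f i ≤ 0}) = Set.univ := by
      apply Set.eq_univ_of_forall
      intro x
      exact Set.mem_iUnion.mpr ⟨1, ⟨x, fun i => isEmptyElim i, dualAct_one M σ x⟩⟩
    have hHp : {f : ι → ℝ | 0 ≤ pairing f δ} = Set.univ :=
      Set.eq_univ_of_forall fun f => by simp [hpair f]
    have hHm : {f : ι → ℝ | pairing f δ ≤ 0} = Set.univ :=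
      Set.eq_univ_of_forall fun f => by simp [hpair f]
    refine ⟨?_, ?_, ?_⟩
    · rw [hSp, closure_univ, hHp]
    · rw [hSm, closure_univ, hHm]
    · rw [hSp, Set.univ_union, closure_univ]
  | inr hne =>
    have h1 : closure (⋃ w : M.Group, dualAct M σ w '' {f : ι → ℝ | ∀ i, 0 ≤ f i})
        = {f : ι → ℝ | 0 ≤ pairing f δ} :=
      Set.Subset.antisymm (closure_subset_halfspace M σ hσ hδpos hδrad)
        (halfspace_subset_closure M σ hσ hPSD hδpos hδrad hradspan)
    have hnegset : (⋃ w : M.Group, dualAct M σ w '' {f : ι → ℝ | ∀ i, f i ≤ 0})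
        = -(⋃ w : M.Group, dualAct M σ w '' {f : ι → ℝ | ∀ i, 0 ≤ f i}) := by
      ext x
      rw [Set.mem_neg]
      simp only [Set.mem_iUnion, Set.mem_image, Set.mem_setOf_eq]
      constructor
      · rintro ⟨w, q, hq, rfl⟩
        exact ⟨w, -q, fun i => by simpa using hq i, by rw [dualAct_neg]⟩
      · rintro ⟨w, q, hq, hqx⟩
        refine ⟨w, -q, fun i => by simpa using hq i, ?_⟩
        rw [dualAct_neg, hqx, neg_neg]
    have h2 : closure (⋃ w : M.Group, dualAct M σ w '' {f : ι → ℝ | ∀ i, f i ≤ 0})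
        = {f : ι → ℝ | pairing f δ ≤ 0} := by
      rw [hnegset, ← neg_closure, h1]
      ext f
      rw [Set.mem_neg]
      simp only [Set.mem_setOf_eq, pairing_neg_left]
      constructor <;> intro h <;> linarith
    refine ⟨h1, h2, ?_⟩
    rw [closure_union, h1, h2]
    apply Set.eq_univ_of_forall
    intro f
    rcases le_total 0 (pairing f δ) with h | h
    · exact Set.mem_union_left _ h
    · exact Set.mem_union_right _ h
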